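/- Suppose Assumption (A2) holds and let n ∈ ℕ. Then there exists a constant C(n,d) > 0, depending only on n, d and B, such that for every multi-index v ∈ ℕ^d with ‖v‖₁ ≤ n, every x ∈ ℝ^d, every y ∈ [0,1]^{d_y}, every t > 0 and every 0 < ε < 0.99: | ∫_{ℝ^d} ((z − α̂_t x)/σ̂_t)^v · f(z,y) · (2π)^{−d/2} σ̂_t^{−d} exp(−‖z − α̂_t x‖₂²/(2σ̂_t²)) dz − ∫_{B_x} ((z − α̂_t x)/σ̂_t)^v · f(z,y) · (2π)^{−d/2} σ̂_t^{−d} exp(−‖z − α̂_t x‖₂²/(2σ̂_t²)) dz | ≤ ε, where B_x = ∏_{i=1}^d [ α̂_t x_i − C(n,d) σ̂_t √(log ε^{−1}), α̂_t x_i + C(n,d) σ̂_t √(log ε^{−1}) ] and w^v = ∏_i w_i^{v_i}. -/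

import Mathlib

open MeasureTheory

noncomputable section

namespace CDM

/-- The ReLU activation function. -/
def relu (x : ℝ) : ℝ := max x 0

/-- The Euclidean norm `‖x‖₂` of a vector `x ∈ ℝ^n`. -/
def norm2 {n : ℕ} (x : Fin n → ℝ) : ℝ := Real.sqrt (∑ i, x i ^ 2)

/-- The sup norm `‖x‖_∞` of a vector `x ∈ ℝ^n`. -/
def normInf {n : ℕ} (x : Fin n → ℝ) : ℝ := ⨆ i, |x i|

/-- A feedforward ReLU network with `depth` affine layers, computing
`x ↦ (A_{L-1} ReLU(·) + b_{L-1}) ∘ ⋯ ∘ (A_0 x + b_0)`. -/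
structure ReLUNet (din dout : ℕ) where
  depth : ℕ
  dims : ℕ → ℕ
  A : (k : ℕ) → Matrix (Fin (dims (k + 1))) (Fin (dims k)) ℝ
  b : (k : ℕ) → Fin (dims (k + 1)) → ℝ
  depth_pos : 1 ≤ depth
  dims_in : dims 0 = din
  dims_out : dims depth = dout

def ReLUNet.evalAux {din dout : ℕ} (net : ReLUNet din dout)
    (x : Fin (net.dims 0) → ℝ) : (k : ℕ) → Fin (net.dims k) → ℝ
  | 0 => x
  | k + 1 => fun i =>
      (∑ j, net.A k i j *
        (if k = 0 then ReLUNet.evalAux net x k j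
         else relu (ReLUNet.evalAux net x k j))) + net.b k i

/-- The function computed by a ReLU network. -/
def ReLUNet.eval {din dout : ℕ} (net : ReLUNet din dout) (x : Fin din → ℝ) :
    Fin dout → ℝ :=
  fun i => net.evalAux (fun j => x (Fin.cast net.dims_in j)) net.depth
    (Fin.cast net.dims_out.symm i)

/-- The number of nonzero parameters of a ReLU network. -/
def ReLUNet.sparsity {din dout : ℕ} (net : ReLUNet din dout) : ℕ :=
  ∑ k ∈ Finset.range net.depth,
    (Nat.card {q : Fin (net.dims (k + 1)) × Fin (net.dims k) // net.A k q.1 q.2 ≠ 0} +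
      Nat.card {i : Fin (net.dims (k + 1)) // net.b k i ≠ 0})

/-- Size constraints on a ReLU network: depth at most `L`, widths at most `W`,
parameter magnitudes at most `κ`, at most `K` nonzero parameters. -/
def ReLUNet.HasSize {din dout : ℕ} (net : ReLUNet din dout)
    (W : ℕ) (κ : ℝ) (L K : ℕ) : Prop :=
  net.depth ≤ L ∧ (∀ k ≤ net.depth, net.dims k ≤ W) ∧
    (∀ k < net.depth, (∀ i j, |net.A k i j| ≤ κ) ∧ ∀ i, |net.b k i| ≤ κ) ∧
    net.sparsity ≤ K

/-- The class `𝓕(M_t, W, κ, L, K)` of conditional score networks,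
taking inputs `(x, y, t) ∈ ℝ^d × ℝ^{d_y} × ℝ` and values in `ℝ^d`. -/
def InScoreClass (d dy : ℕ) (M : ℝ → ℝ) (W : ℕ) (κ : ℝ) (L K : ℕ)
    (s : (Fin d → ℝ) → (Fin dy → ℝ) → ℝ → Fin d → ℝ) : Prop :=
  ∃ net : ReLUNet (d + dy + 1) d, net.HasSize W κ L K ∧
    (∀ x y t, s x y t = net.eval (Fin.append (Fin.append x y) ![t])) ∧
    ∀ t x y i, |s x y t i| ≤ M t

/-- The class of unconditional score networks, with inputs `(x, t)`. -/
def InScoreClass2 (d : ℕ) (M : ℝ → ℝ) (W : ℕ) (κ : ℝ) (L K : ℕ)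
    (s : (Fin d → ℝ) → ℝ → Fin d → ℝ) : Prop :=
  ∃ net : ReLUNet (d + 1) d, net.HasSize W κ L K ∧
    (∀ x t, s x t = net.eval (Fin.append x ![t])) ∧
    ∀ t x i, |s x t i| ≤ M t

/-- `α_t = e^{-t/2}`. -/
def alphaT (t : ℝ) : ℝ := Real.exp (-t / 2)

/-- `σ_t = √(1 - e^{-t})`. -/
def sigmaT (t : ℝ) : ℝ := Real.sqrt (1 - Real.exp (-t))

/-- The Gaussian transition kernel: the density of `N(α_t z, σ_t² I_d)` at `x`. -/
def gaussKernel (d : ℕ) (t : ℝ) (z x : Fin d → ℝ) : ℝ :=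
  (sigmaT t ^ d * (2 * Real.pi) ^ ((d : ℝ) / 2))⁻¹ *
    Real.exp (-(norm2 (fun i => alphaT t * z i - x i)) ^ 2 / (2 * sigmaT t ^ 2))

/-- The diffused conditional density `p_t(x|y)`. -/
def diffDensity (d dy : ℕ) (p : (Fin d → ℝ) → (Fin dy → ℝ) → ℝ) (t : ℝ)
    (x : Fin d → ℝ) (y : Fin dy → ℝ) : ℝ :=
  ∫ z : Fin d → ℝ, p z y * gaussKernel d t z x

/-- The conditional score `∇_x log p_t(x|y)`. -/
def score (d dy : ℕ) (p : (Fin d → ℝ) → (Fin dy → ℝ) → ℝ) (t : ℝ)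
    (x : Fin d → ℝ) (y : Fin dy → ℝ) : Fin d → ℝ :=
  fun i => fderiv ℝ (fun x' => Real.log (diffDensity d dy p t x' y)) x (Pi.single i 1)

/-- The partial derivative in the `i`-th coordinate direction. -/
def pderiv (D : ℕ) (i : Fin D) (f : (Fin D → ℝ) → ℝ) : (Fin D → ℝ) → ℝ :=
  fun x => fderiv ℝ f x (Pi.single i 1)

/-- The multi-index partial derivative `∂^k f`. -/
def multiDeriv (D : ℕ) (k : Fin D → ℕ) : ((Fin D → ℝ) → ℝ) → ((Fin D → ℝ) → ℝ) :=
  (List.ofFn fun i : Fin D => (pderiv D i)^[k i]).foldr (· ∘ ·) id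

/-- Membership in the Hölder ball `H^β(ℝ^D, B)`: `f` is `⌊β⌋`-times differentiable and
its Hölder norm is `< B`. -/
def MemHolderBall (D : ℕ) (β B : ℝ) (f : (Fin D → ℝ) → ℝ) : Prop :=
  ContDiff ℝ (⌊β⌋₊ : ℕ) f ∧
  ∃ b₁ b₂ : ℝ, b₁ + b₂ < B ∧
    (∀ k : Fin D → ℕ, (∑ i, k i) ≤ ⌊β⌋₊ → ∀ x, |multiDeriv D k f x| ≤ b₁) ∧
    (∀ k : Fin D → ℕ, (∑ i, k i) = ⌊β⌋₊ → ∀ x z, x ≠ z →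
      |multiDeriv D k f x - multiDeriv D k f z| ≤
        b₂ * normInf (x - z) ^ (β - (⌊β⌋₊ : ℝ)))

/-- `y ∈ [0,1]^{d_y}`. -/
def InUnitCube (dy : ℕ) (y : Fin dy → ℝ) : Prop := ∀ i, y i ∈ Set.Icc (0 : ℝ) 1

/-- Assumption (A1): `p(·|y)` is a conditional probability density, `(x,y) ↦ p(x|y)`
agrees on `ℝ^d × [0,1]^{d_y}` with a function in the Hölder ball `H^β(ℝ^{d+d_y}, B)`,
and `p(x|y) ≤ C₁ exp(-C₂‖x‖₂²/2)`. -/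
structure AssumptionA1 (d dy : ℕ) (β B C₁ C₂ : ℝ)
    (p : (Fin d → ℝ) → (Fin dy → ℝ) → ℝ) : Prop where
  beta_pos : 0 < β
  B_pos : 0 < B
  C1_pos : 0 < C₁
  C2_pos : 0 < C₂
  nonneg : ∀ x y, InUnitCube dy y → 0 ≤ p x y
  total_mass : ∀ y, InUnitCube dy y → (∫ x, p x y) = 1
  holder : ∃ q : (Fin (d + dy) → ℝ) → ℝ, MemHolderBall (d + dy) β B q ∧
    ∀ (x : Fin d → ℝ) (y : Fin dy → ℝ), InUnitCube dy y → p x y = q (Fin.append x y)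
  tail : ∀ x y, InUnitCube dy y → p x y ≤ C₁ * Real.exp (-C₂ * norm2 x ^ 2 / 2)

/-- The conditional density of Assumption (A2): `p(x|y) = exp(-C₂‖x‖₂²/2)·f(x,y)`. -/
def densityA2 (d dy : ℕ) (C₂ : ℝ) (f : (Fin d → ℝ) → (Fin dy → ℝ) → ℝ) :
    (Fin d → ℝ) → (Fin dy → ℝ) → ℝ :=
  fun x y => Real.exp (-C₂ * norm2 x ^ 2 / 2) * f x y

/-- Assumption (A2): `p(x|y) = exp(-C₂‖x‖₂²/2)·f(x,y)` is a conditional probability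
density, where `f` agrees on `ℝ^d × [0,1]^{d_y}` with a function in the Hölder ball
`H^β(ℝ^{d+d_y}, B)` and `f ≥ C > 0`. -/
structure AssumptionA2 (d dy : ℕ) (β B C C₂ : ℝ)
    (f : (Fin d → ℝ) → (Fin dy → ℝ) → ℝ) : Prop where
  beta_pos : 0 < β
  B_pos : 0 < B
  C_pos : 0 < C
  C2_pos : 0 < C₂
  holder : ∃ q : (Fin (d + dy) → ℝ) → ℝ, MemHolderBall (d + dy) β B q ∧
    ∀ (x : Fin d → ℝ) (y : Fin dy → ℝ), InUnitCube dy y → f x y = q (Fin.append x y)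
  lower : ∀ x y, InUnitCube dy y → C ≤ f x y
  total_mass : ∀ y, InUnitCube dy y → (∫ x, densityA2 d dy C₂ f x y) = 1

/-- `σ̂_t = σ_t/√(α_t² + C₂σ_t²)`. -/
def sigmaHat (C₂ t : ℝ) : ℝ := sigmaT t / Real.sqrt (alphaT t ^ 2 + C₂ * sigmaT t ^ 2)

/-- `α̂_t = α_t/(α_t² + C₂σ_t²)`. -/
def alphaHat (C₂ t : ℝ) : ℝ := alphaT t / (alphaT t ^ 2 + C₂ * sigmaT t ^ 2)

/-- `h(x,y,t) = ∫ f(z,y) (2π)^{-d/2} σ̂_t^{-d} exp(-‖z - α̂_t x‖²/(2σ̂_t²)) dz`. -/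
def hFun (d dy : ℕ) (C₂ : ℝ) (f : (Fin d → ℝ) → (Fin dy → ℝ) → ℝ) (t : ℝ)
    (x : Fin d → ℝ) (y : Fin dy → ℝ) : ℝ :=
  ∫ z : Fin d → ℝ, f z y * ((2 * Real.pi) ^ ((d : ℝ) / 2) * sigmaHat C₂ t ^ d)⁻¹ *
    Real.exp (-(norm2 (fun i => z i - alphaHat C₂ t * x i)) ^ 2 / (2 * sigmaHat C₂ t ^ 2))

/-- The total variation distance between two measures. -/
def tvDist {α : Type*} [MeasurableSpace α] (μ ν : Measure α) : ℝ :=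
  ⨆ A : {A : Set α // MeasurableSet A}, |(μ A.1).toReal - (ν A.1).toReal|

/-- The classifier-free guidance loss `ℓ(x,y;s)`. -/
def cfLoss (d dy : ℕ) (t₀ T : ℝ)
    (s₁ : (Fin d → ℝ) → (Fin dy → ℝ) → ℝ → Fin d → ℝ)
    (s₂ : (Fin d → ℝ) → ℝ → Fin d → ℝ)
    (x : Fin d → ℝ) (y : Fin dy → ℝ) : ℝ :=
  ∫ t in t₀..T, (T - t₀)⁻¹ *
    ∫ x' : Fin d → ℝ, gaussKernel d t x x' *
      ((1 / 2) * norm2 (fun i => s₁ x' y t i + (x' i - alphaT t * x i) / sigmaT t ^ 2) ^ 2 +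
       (1 / 2) * norm2 (fun i => s₂ x' t i + (x' i - alphaT t * x i) / sigmaT t ^ 2) ^ 2)

/-- The empirical classifier-free risk `𝓛̂(s)` on a sample of size `n`. -/
def empRisk (d dy n : ℕ) (t₀ T : ℝ)
    (s₁ : (Fin d → ℝ) → (Fin dy → ℝ) → ℝ → Fin d → ℝ)
    (s₂ : (Fin d → ℝ) → ℝ → Fin d → ℝ)
    (ω : Fin n → (Fin d → ℝ) × (Fin dy → ℝ)) : ℝ :=
  (n : ℝ)⁻¹ * ∑ i, cfLoss d dy t₀ T s₁ s₂ (ω i).1 (ω i).2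

/-- The conditional score risk `𝓡(s₁)`. -/
def condRisk (d dy : ℕ) (p : (Fin d → ℝ) → (Fin dy → ℝ) → ℝ)
    (Py : Measure (Fin dy → ℝ)) (t₀ T : ℝ)
    (s₁ : (Fin d → ℝ) → (Fin dy → ℝ) → ℝ → Fin d → ℝ) : ℝ :=
  ∫ t in t₀..T, (T - t₀)⁻¹ *
    ∫ y, (∫ x : Fin d → ℝ,
      norm2 (fun i => s₁ x y t i - score d dy p t x y i) ^ 2 *
        diffDensity d dy p t x y) ∂Py

/-- The density class `𝓟` of Proposition 4.5. -/
def PClass (d : ℕ) (β B C C₂ : ℝ) : Set ((Fin d → ℝ) → ℝ) :=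
  {p | (∀ x, 0 ≤ p x) ∧ (∫ x, p x) = 1 ∧
    ∃ f : (Fin d → ℝ) → ℝ, MemHolderBall d β B f ∧ (∀ x, C ≤ f x) ∧
      ∀ x, p x = f x * Real.exp (-C₂ * norm2 x ^ 2)}


/-! ### Auxiliary lemmas for `statement15` -/

lemma aux15_norm2_nonneg {n : ℕ} (x : Fin n → ℝ) : 0 ≤ norm2 x := Real.sqrt_nonneg _

lemma aux15_norm2_sq {n : ℕ} (x : Fin n → ℝ) : norm2 x ^ 2 = ∑ i, x i ^ 2 :=
  Real.sq_sqrt (Finset.sum_nonneg fun _ _ => sq_nonneg _)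

lemma aux15_continuous_norm2 {n : ℕ} : Continuous (norm2 (n := n)) :=
  Real.continuous_sqrt.comp (continuous_finset_sum _ fun i _ => (continuous_apply i).pow 2)

lemma aux15_norm2_smul {d : ℕ} {c : ℝ} (hc : 0 ≤ c) (w : Fin d → ℝ) :
    norm2 (c • w) = c * norm2 w := by
  unfold norm2
  have h : ∑ i, (c • w) i ^ 2 = c ^ 2 * ∑ i, w i ^ 2 := by
    rw [Finset.mul_sum]
    exact Finset.sum_congr rfl fun i _ => by simp [mul_pow]
  rw [h, Real.sqrt_mul (sq_nonneg c), Real.sqrt_sq hc]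

lemma aux15_multiDeriv_zero (D : ℕ) (f : (Fin D → ℝ) → ℝ) :
    multiDeriv D (fun _ => 0) f = f := by
  have h : ∀ l : List (((Fin D → ℝ) → ℝ) → ((Fin D → ℝ) → ℝ)),
      (∀ g ∈ l, g = id) → l.foldr (· ∘ ·) id = id := by
    intro l
    induction l with
    | nil => simp
    | cons a l ih =>
        intro h
        have ha := h a (by simp)
        simp only [List.foldr_cons, ih (fun g hg => h g (by simp [hg])), ha]
        rfl
  unfold multiDeriv
  rw [h _ (by simp [Function.iterate_zero])]
  rfl

lemma aux15_abs_le_of_memHolderBall {D : ℕ} (hD : 0 < D) {β B : ℝ}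
    {q : (Fin D → ℝ) → ℝ} (h : MemHolderBall D β B q) : ∀ x, |q x| ≤ B := by
  obtain ⟨-, b₁, b₂, hb, h1, h2⟩ := h
  have hNe : Nonempty (Fin D) := ⟨⟨0, hD⟩⟩
  have hb₂ : 0 ≤ b₂ := by
    set i0 : Fin D := ⟨0, hD⟩
    set k : Fin D → ℕ := fun i => if i = i0 then ⌊β⌋₊ else 0 with hk
    have hsum : (∑ i, k i) = ⌊β⌋₊ := by simp [hk]
    have hxz : (fun _ : Fin D => (0:ℝ)) ≠ (fun _ => 1) := by
      intro hxy
      have := congrFun hxy i0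
      norm_num at this
    have h2' := h2 k hsum (fun _ => 0) (fun _ => 1) hxz
    have hnorm : normInf ((fun _ : Fin D => (0:ℝ)) - fun _ => 1) = 1 := by
      have he : ((fun _ : Fin D => (0:ℝ)) - fun _ => 1) = fun _ => (-1 : ℝ) := by
        funext i; simp
      rw [he]
      unfold normInf
      simp [ciSup_const]
    rw [hnorm, Real.one_rpow, mul_one] at h2'
    exact le_trans (abs_nonneg _) h2'
  intro x
  have h0 := h1 (fun _ => 0) (by simp) x
  rw [aux15_multiDeriv_zero] at h0
  linarith

lemma aux15_key_real_ineq (n : ℕ) {r : ℝ} (hr : 0 ≤ r) :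
    (1 + r) ^ n * Real.exp (-r ^ 2 / 4) ≤
      (2 ^ n * (1 + 8 ^ n * n.factorial)) * Real.exp (-r ^ 2 / 8) := by
  have h1 : (1 + r) ^ n ≤ 2 ^ n * (1 + r ^ (2 * n)) := by
    rcases le_total r 1 with h | h
    · calc (1 + r) ^ n ≤ 2 ^ n := by
            apply pow_le_pow_left₀ (by linarith) (by linarith)
        _ ≤ 2 ^ n * (1 + r ^ (2 * n)) := by
            nlinarith [pow_nonneg hr (2 * n), pow_pos (show (0:ℝ) < 2 by norm_num) n]
    · calc (1 + r) ^ n ≤ (2 * r) ^ n := by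
            apply pow_le_pow_left₀ (by linarith) (by linarith)
        _ = 2 ^ n * r ^ n := by rw [mul_pow]
        _ ≤ 2 ^ n * r ^ (2 * n) := by
            apply mul_le_mul_of_nonneg_left _ (by positivity)
            exact pow_le_pow_right₀ h (by omega)
        _ ≤ 2 ^ n * (1 + r ^ (2 * n)) := by
            apply mul_le_mul_of_nonneg_left _ (by positivity)
            linarith
  have h2 : r ^ (2 * n) ≤ 8 ^ n * n.factorial * Real.exp (r ^ 2 / 8) := by
    have hpf := Real.pow_div_factorial_le_exp (x := r ^ 2 / 8) (by positivity) n
    have h8 : r ^ (2 * n) = 8 ^ n * (r ^ 2 / 8) ^ n := by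
      rw [div_pow, pow_mul]; field_simp
    rw [h8]
    rw [div_le_iff₀ (by positivity : (0:ℝ) < (n.factorial : ℝ))] at hpf
    calc (8:ℝ) ^ n * (r ^ 2 / 8) ^ n ≤ 8 ^ n * (Real.exp (r ^ 2 / 8) * n.factorial) := by
          apply mul_le_mul_of_nonneg_left hpf (by positivity)
      _ = 8 ^ n * n.factorial * Real.exp (r ^ 2 / 8) := by ring
  have hexp1 : (1:ℝ) ≤ Real.exp (r ^ 2 / 8) := by
    rw [← Real.exp_zero]; exact Real.exp_le_exp.2 (by positivity)
  have key : (1 + r) ^ n ≤ (2 ^ n * (1 + 8 ^ n * n.factorial)) * Real.exp (r ^ 2 / 8) := by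
    calc (1 + r) ^ n ≤ 2 ^ n * (1 + r ^ (2 * n)) := h1
      _ ≤ 2 ^ n * (1 * Real.exp (r ^ 2 / 8) + 8 ^ n * n.factorial * Real.exp (r ^ 2 / 8)) := by
          apply mul_le_mul_of_nonneg_left _ (by positivity)
          nlinarith
      _ = (2 ^ n * (1 + 8 ^ n * n.factorial)) * Real.exp (r ^ 2 / 8) := by ring
  calc (1 + r) ^ n * Real.exp (-r ^ 2 / 4)
      ≤ ((2 ^ n * (1 + 8 ^ n * n.factorial)) * Real.exp (r ^ 2 / 8)) * Real.exp (-r ^ 2 / 4) := by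
        apply mul_le_mul_of_nonneg_right key (Real.exp_nonneg _)
    _ = (2 ^ n * (1 + 8 ^ n * n.factorial)) * Real.exp (-r ^ 2 / 8) := by
        rw [mul_assoc, ← Real.exp_add]; ring_nf

lemma aux15_integrable_gauss_pi (d : ℕ) (b : ℝ) (hb : 0 < b) :
    Integrable (fun w : Fin d → ℝ => Real.exp (-norm2 w ^ 2 * b)) := by
  have h : (fun w : Fin d → ℝ => Real.exp (-norm2 w ^ 2 * b)) =
      fun w : Fin d → ℝ => ∏ i, Real.exp (-b * (w i) ^ 2) := by
    funext w
    rw [← Real.exp_sum]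
    congr 1
    have hs : ∑ x : Fin d, -b * w x ^ 2 = -(b * ∑ x : Fin d, w x ^ 2) := by
      simp [Finset.mul_sum]
    rw [hs, aux15_norm2_sq]
    ring
  rw [h]
  exact Integrable.fintype_prod (f := fun (_ : Fin d) (u : ℝ) => Real.exp (-b * u ^ 2))
    fun _ => integrable_exp_neg_mul_sq hb

/-- The kernel function used as majorant in Lemma B.8. -/
def aux15F (d n : ℕ) (w : Fin d → ℝ) : ℝ :=
  (1 + norm2 w) ^ n * Real.exp (-norm2 w ^ 2 / 4)

lemma aux15F_nonneg (d n : ℕ) (w : Fin d → ℝ) : 0 ≤ aux15F d n w :=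
  mul_nonneg (pow_nonneg (by linarith [aux15_norm2_nonneg w]) n) (Real.exp_nonneg _)

lemma aux15_continuous_F (d n : ℕ) : Continuous (aux15F d n) := by
  unfold aux15F
  apply Continuous.mul
  · exact ((continuous_const.add aux15_continuous_norm2).pow n)
  · exact Real.continuous_exp.comp ((aux15_continuous_norm2.pow 2).neg.div_const 4)

lemma aux15_integrable_F (d n : ℕ) : Integrable (aux15F d n) := by
  have hmaj : Integrable (fun w : Fin d → ℝ =>
      ((2:ℝ) ^ n * (1 + 8 ^ n * n.factorial)) * Real.exp (-norm2 w ^ 2 * (1/8))) :=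
    (aux15_integrable_gauss_pi d (1/8) (by norm_num)).const_mul _
  refine hmaj.mono' (aux15_continuous_F d n).aestronglyMeasurable
    (Filter.Eventually.of_forall fun w => ?_)
  rw [Real.norm_eq_abs, abs_of_nonneg (aux15F_nonneg d n w)]
  have h := aux15_key_real_ineq n (aux15_norm2_nonneg w)
  have heq : -norm2 w ^ 2 * (1/8) = -norm2 w ^ 2 / 8 := by ring
  rw [heq]
  exact h

set_option maxHeartbeats 2000000 in
/-- Lemma B.8: clipping the Gaussian-weighted integral of `f` to a
bounded region, under Assumption (A2). -/
theorem statement15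
    (d : ℕ) (hd : 1 ≤ d) (n : ℕ) (B : ℝ) (hB : 0 < B) :
    ∃ Cnd : ℝ, 0 < Cnd ∧
      ∀ dy : ℕ, 1 ≤ dy →
        ∀ (β C C₂ : ℝ) (f : (Fin d → ℝ) → (Fin dy → ℝ) → ℝ),
          AssumptionA2 d dy β B C C₂ f →
          ∀ v : Fin d → ℕ, (∑ i, v i) ≤ n →
            ∀ (x : Fin d → ℝ) (y : Fin dy → ℝ), InUnitCube dy y →
              ∀ t : ℝ, 0 < t → ∀ ε : ℝ, 0 < ε → ε < 0.99 →
                |(∫ z : Fin d → ℝ,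
                    (∏ i, ((z i - alphaHat C₂ t * x i) / sigmaHat C₂ t) ^ v i) *
                      f z y * ((2 * Real.pi) ^ ((d : ℝ) / 2) * sigmaHat C₂ t ^ d)⁻¹ *
                      Real.exp (-(norm2 (fun i => z i - alphaHat C₂ t * x i)) ^ 2 /
                        (2 * sigmaHat C₂ t ^ 2))) -
                  (∫ z in {z : Fin d → ℝ | ∀ i,
                      alphaHat C₂ t * x i - Cnd * sigmaHat C₂ t * Real.sqrt (Real.log ε⁻¹)
                          ≤ z i ∧
                        z i ≤ alphaHat C₂ t * x i +
                          Cnd * sigmaHat C₂ t * Real.sqrt (Real.log ε⁻¹)},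
                    (∏ i, ((z i - alphaHat C₂ t * x i) / sigmaHat C₂ t) ^ v i) *
                      f z y * ((2 * Real.pi) ^ ((d : ℝ) / 2) * sigmaHat C₂ t ^ d)⁻¹ *
                      Real.exp (-(norm2 (fun i => z i - alphaHat C₂ t * x i)) ^ 2 /
                        (2 * sigmaHat C₂ t ^ 2)))|
                  ≤ ε := by
  classical
  -- the universal constant
  set I : ℝ := ∫ w : Fin d → ℝ, aux15F d n w with hIdef
  have hI : 0 ≤ I := integral_nonneg (aux15F_nonneg d n)
  set A : ℝ := max (B * I) 1 with hAdef
  have hA1 : (1:ℝ) ≤ A := le_max_right _ _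
  have hA0 : (0:ℝ) < A := lt_of_lt_of_le one_pos hA1
  have hlogA : 0 ≤ Real.log A := Real.log_nonneg hA1
  set L₀ : ℝ := Real.log (0.99:ℝ)⁻¹ with hL0def
  have hL0 : 0 < L₀ := Real.log_pos (by norm_num)
  have harg : (0:ℝ) < 1 + Real.log A / L₀ := by
    have := div_nonneg hlogA hL0.le; linarith
  refine ⟨2 * Real.sqrt (1 + Real.log A / L₀), by
    have := Real.sqrt_pos.2 harg; linarith, ?_⟩
  set Cnd : ℝ := 2 * Real.sqrt (1 + Real.log A / L₀) with hCnddef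
  have hCpos : 0 < Cnd := by have := Real.sqrt_pos.2 harg; rw [hCnddef]; linarith
  have hCnd_sq : Cnd ^ 2 = 4 * (1 + Real.log A / L₀) := by
    rw [hCnddef, mul_pow, Real.sq_sqrt harg.le]; norm_num
  intro dy hdy β C C₂ f hA2 v hv x y hy t ht ε hε hε99
  -- positivity facts
  have hσt : 0 < sigmaT t := by
    apply Real.sqrt_pos.2
    have : Real.exp (-t) < 1 := Real.exp_lt_one_iff.2 (by linarith)
    linarith
  have hαt : 0 < alphaT t := Real.exp_pos _
  have hden : 0 < alphaT t ^ 2 + C₂ * sigmaT t ^ 2 := by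
    have := hA2.C2_pos
    nlinarith [sq_nonneg (sigmaT t)]
  have hσ : 0 < sigmaHat C₂ t := div_pos hσt (Real.sqrt_pos.2 hden)
  set σ : ℝ := sigmaHat C₂ t with hσdef
  set a : ℝ := alphaHat C₂ t with hadef
  -- bound and continuity of f(·, y)
  obtain ⟨q, hq, hqf⟩ := hA2.holder
  have hfbd : ∀ z, |f z y| ≤ B := fun z => by
    rw [hqf z y hy]; exact aux15_abs_le_of_memHolderBall (by omega) hq _
  have hfc : Continuous fun z : Fin d → ℝ => f z y := by
    have happ : Continuous fun z : Fin d → ℝ => Fin.append z y := by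
      refine continuous_pi fun i => ?_
      refine Fin.addCases (motive := fun i => Continuous fun z : Fin d → ℝ =>
        Fin.append z y i) (fun j => ?_) (fun j => ?_) i
      · simp only [Fin.append_left]; exact continuous_apply j
      · simp only [Fin.append_right]; exact continuous_const
    have he : (fun z : Fin d → ℝ => f z y) = fun z => q (Fin.append z y) :=
      funext fun z => hqf z y hy
    rw [he]
    exact hq.1.continuous.comp happ
  -- the log scale
  set L : ℝ := Real.log ε⁻¹ with hLdef
  have hL_ge : L₀ ≤ L := by
    have h1 : (0.99:ℝ)⁻¹ ≤ ε⁻¹ := by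
      have h2 := one_div_le_one_div_of_le hε hε99.le
      simpa [one_div] using h2
    exact Real.log_le_log (by norm_num) h1
  have hL : 0 < L := lt_of_lt_of_le hL0 hL_ge
  have hsqL : Real.sqrt L ^ 2 = L := Real.sq_sqrt hL.le
  -- abbreviations
  set c : ℝ := ((2 * Real.pi) ^ ((d:ℝ) / 2) * σ ^ d)⁻¹ with hcdef
  have hP1 : (1:ℝ) ≤ (2 * Real.pi) ^ ((d:ℝ) / 2) :=
    Real.one_le_rpow (by nlinarith [Real.pi_gt_three]) (by positivity)
  have hP0 : (0:ℝ) < (2 * Real.pi) ^ ((d:ℝ) / 2) := lt_of_lt_of_le one_pos hP1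
  have hc : 0 < c := by rw [hcdef]; positivity
  set μf : Fin d → ℝ := fun i => a * x i with hμdef
  set R : ℝ := Cnd * σ * Real.sqrt L with hRdef
  have hR : 0 ≤ R := by
    rw [hRdef]; positivity
  set S : Set (Fin d → ℝ) :=
    {z : Fin d → ℝ | ∀ i, a * x i - Cnd * σ * Real.sqrt L ≤ z i ∧
      z i ≤ a * x i + Cnd * σ * Real.sqrt L} with hSdef
  have hS : MeasurableSet S := by
    have he : S = ⋂ i, (fun z : Fin d → ℝ => z i) ⁻¹'
        (Set.Icc (a * x i - R) (a * x i + R)) := by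
      ext z; simp [hSdef, Set.mem_iInter, Set.mem_Icc, hRdef]
    rw [he]
    exact MeasurableSet.iInter fun i => (measurable_pi_apply i) measurableSet_Icc
  set φ : (Fin d → ℝ) → ℝ := fun z =>
    (∏ i, ((z i - a * x i) / σ) ^ v i) * f z y *
      ((2 * Real.pi) ^ ((d:ℝ) / 2) * σ ^ d)⁻¹ *
      Real.exp (-(norm2 fun i => z i - a * x i) ^ 2 / (2 * σ ^ 2)) with hφdef
  set ψ : (Fin d → ℝ) → ℝ := fun z => (B * c) * aux15F d n (σ⁻¹ • (z - μf)) with hψdef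
  -- pointwise identification of ψ
  have hzr : ∀ z : Fin d → ℝ,
      norm2 (σ⁻¹ • (z - μf)) = σ⁻¹ * norm2 (fun i => z i - a * x i) := by
    intro z
    have he : z - μf = fun i => z i - a * x i := rfl
    rw [he, aux15_norm2_smul (by positivity)]
  have hψ_eq : ∀ z : Fin d → ℝ,
      ψ z = (B * c) * ((1 + σ⁻¹ * norm2 (fun i => z i - a * x i)) ^ n *
        Real.exp (-(norm2 (fun i => z i - a * x i)) ^ 2 / (4 * σ ^ 2))) := by
    intro z
    simp only [hψdef]
    unfold aux15F
    have hσne : σ ≠ 0 := hσ.ne'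
    have harg2 : -(σ⁻¹ * norm2 (fun i => z i - a * x i)) ^ 2 / 4 =
        -(norm2 (fun i => z i - a * x i)) ^ 2 / (4 * σ ^ 2) := by
      ring
    rw [hzr z, harg2]
  have hψ_nonneg : ∀ z, 0 ≤ ψ z := fun z =>
    mul_nonneg (mul_nonneg hB.le hc.le) (aux15F_nonneg d n _)
  -- pointwise bounds on φ
  have habs : ∀ z : Fin d → ℝ,
      |φ z| ≤ (B * c) * ((1 + σ⁻¹ * norm2 (fun i => z i - a * x i)) ^ n *
        Real.exp (-(norm2 (fun i => z i - a * x i)) ^ 2 / (2 * σ ^ 2))) := by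
    intro z
    set r : ℝ := norm2 (fun i => z i - a * x i) with hrdef
    have hr0 : 0 ≤ r := aux15_norm2_nonneg _
    have hri : ∀ i, |z i - a * x i| ≤ r := by
      intro i
      rw [hrdef]
      unfold norm2
      rw [← Real.sqrt_sq_eq_abs]
      exact Real.sqrt_le_sqrt (Finset.single_le_sum
        (fun j _ => sq_nonneg ((z j - a * x j))) (Finset.mem_univ i))
    have hu1 : (1:ℝ) ≤ 1 + σ⁻¹ * r := by
      have : 0 ≤ σ⁻¹ * r := by positivity
      linarith
    have hprod : |∏ i, ((z i - a * x i) / σ) ^ v i| ≤ (1 + σ⁻¹ * r) ^ n := by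
      rw [Finset.abs_prod]
      calc ∏ i, |((z i - a * x i) / σ) ^ v i|
          ≤ ∏ i, (1 + σ⁻¹ * r) ^ v i := by
            apply Finset.prod_le_prod (fun i _ => abs_nonneg _)
            intro i _
            rw [abs_pow]
            apply pow_le_pow_left₀ (abs_nonneg _)
            rw [abs_div, abs_of_pos hσ, div_le_iff₀ hσ]
            calc |z i - a * x i| ≤ r := hri i
              _ = σ⁻¹ * r * σ := by field_simp
              _ ≤ (1 + σ⁻¹ * r) * σ := by nlinarith
        _ = (1 + σ⁻¹ * r) ^ (∑ i, v i) := Finset.prod_pow_eq_pow_sum _ _ _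
        _ ≤ (1 + σ⁻¹ * r) ^ n := pow_le_pow_right₀ hu1 hv
    simp only [hφdef]
    rw [abs_mul, abs_mul, abs_mul, abs_of_pos (show (0:ℝ) <
      ((2 * Real.pi) ^ ((d:ℝ) / 2) * σ ^ d)⁻¹ by positivity),
      abs_of_pos (Real.exp_pos _)]
    calc |∏ i, ((z i - a * x i) / σ) ^ v i| * |f z y| *
          ((2 * Real.pi) ^ ((d:ℝ) / 2) * σ ^ d)⁻¹ *
          Real.exp (-(norm2 fun i => z i - a * x i) ^ 2 / (2 * σ ^ 2))
        ≤ (1 + σ⁻¹ * r) ^ n * B * c *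
            Real.exp (-(norm2 fun i => z i - a * x i) ^ 2 / (2 * σ ^ 2)) := by
          have h1 : (0:ℝ) < ((2 * Real.pi) ^ ((d:ℝ) / 2) * σ ^ d)⁻¹ := by positivity
          have h2 := hfbd z
          have h3 := abs_nonneg (∏ i, ((z i - a * x i) / σ) ^ v i)
          have h4 := abs_nonneg (f z y)
          have hcc : ((2 * Real.pi) ^ ((d:ℝ) / 2) * σ ^ d)⁻¹ = c := rfl
          rw [hcc]
          have hexp := Real.exp_nonneg (-(norm2 fun i => z i - a * x i) ^ 2 / (2 * σ ^ 2))
          apply mul_le_mul_of_nonneg_right _ hexp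
          apply mul_le_mul_of_nonneg_right _ hc.le
          apply mul_le_mul hprod h2 h4 (by positivity)
      _ = (B * c) * ((1 + σ⁻¹ * r) ^ n *
            Real.exp (-(norm2 fun i => z i - a * x i) ^ 2 / (2 * σ ^ 2))) := by ring
  have hexp_half : ∀ z : Fin d → ℝ,
      Real.exp (-(norm2 (fun i => z i - a * x i)) ^ 2 / (2 * σ ^ 2)) ≤
        Real.exp (-(norm2 (fun i => z i - a * x i)) ^ 2 / (4 * σ ^ 2)) := by
    intro z
    apply Real.exp_le_exp.2
    have hr0 : 0 ≤ norm2 (fun i => z i - a * x i) := aux15_norm2_nonneg _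
    have h4 : (0:ℝ) < 4 * σ ^ 2 := by positivity
    have h2 : (0:ℝ) < 2 * σ ^ 2 := by positivity
    rw [div_le_div_iff₀ h2 h4]
    nlinarith [sq_nonneg (norm2 (fun i => z i - a * x i))]
  have hbound : ∀ z : Fin d → ℝ, |φ z| ≤ ψ z := by
    intro z
    refine le_trans (habs z) ?_
    rw [hψ_eq z]
    apply mul_le_mul_of_nonneg_left _ (by positivity)
    apply mul_le_mul_of_nonneg_left (hexp_half z)
    have : (0:ℝ) ≤ σ⁻¹ * norm2 (fun i => z i - a * x i) := by
      have := aux15_norm2_nonneg (fun i => z i - a * x i); positivity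
    positivity
  have hboundSc : ∀ z ∈ Sᶜ, |φ z| ≤ Real.exp (-(Cnd ^ 2 * L / 4)) * ψ z := by
    intro z hz
    set r : ℝ := norm2 (fun i => z i - a * x i) with hrdef
    have hr0 : 0 ≤ r := aux15_norm2_nonneg _
    -- on the complement, r ≥ R
    have hrR : R ≤ r := by
      rw [Set.mem_compl_iff, hSdef, Set.mem_setOf_eq] at hz
      push_neg at hz
      obtain ⟨i, hi⟩ := hz
      have hri : |z i - a * x i| ≤ r := by
        rw [hrdef]
        unfold norm2
        rw [← Real.sqrt_sq_eq_abs]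
        exact Real.sqrt_le_sqrt (Finset.single_le_sum
          (fun j _ => sq_nonneg ((z j - a * x j))) (Finset.mem_univ i))
      have hRR : Cnd * σ * Real.sqrt L = R := rfl
      rcases le_or_gt (a * x i - Cnd * σ * Real.sqrt L) (z i) with h1 | h1
      · have h2 := hi h1
        rw [hRR] at h2
        calc R ≤ z i - a * x i := by linarith
          _ ≤ |z i - a * x i| := le_abs_self _
          _ ≤ r := hri
      · rw [hRR] at h1
        calc R ≤ -(z i - a * x i) := by linarith
          _ ≤ |z i - a * x i| := neg_le_abs _
          _ ≤ r := hri
    have hsplit : Real.exp (-r ^ 2 / (2 * σ ^ 2)) ≤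
        Real.exp (-(Cnd ^ 2 * L / 4)) * Real.exp (-r ^ 2 / (4 * σ ^ 2)) := by
      rw [← Real.exp_add]
      apply Real.exp_le_exp.2
      have hRsq : R ^ 2 = Cnd ^ 2 * σ ^ 2 * L := by
        rw [hRdef, mul_pow, mul_pow, hsqL]
      have hr2 : R ^ 2 ≤ r ^ 2 := pow_le_pow_left₀ hR hrR 2
      have hσ2 : (0:ℝ) < σ ^ 2 := by positivity
      have h1 : Cnd ^ 2 * L / 4 ≤ r ^ 2 / (4 * σ ^ 2) := by
        rw [div_le_div_iff₀ (by norm_num) (by positivity)]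
        nlinarith
      have h2 : -r ^ 2 / (2 * σ ^ 2) = -(r ^ 2 / (4 * σ ^ 2)) + -(r ^ 2 / (4 * σ ^ 2)) := by
        field_simp
        ring
      have h3 : -r ^ 2 / (4 * σ ^ 2) = -(r ^ 2 / (4 * σ ^ 2)) := by ring
      linarith
    calc |φ z| ≤ (B * c) * ((1 + σ⁻¹ * r) ^ n * Real.exp (-r ^ 2 / (2 * σ ^ 2))) := habs z
      _ ≤ (B * c) * ((1 + σ⁻¹ * r) ^ n *
          (Real.exp (-(Cnd ^ 2 * L / 4)) * Real.exp (-r ^ 2 / (4 * σ ^ 2)))) := by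
        apply mul_le_mul_of_nonneg_left _ (by positivity)
        apply mul_le_mul_of_nonneg_left hsplit
        have : (0:ℝ) ≤ σ⁻¹ * r := by positivity
        positivity
      _ = Real.exp (-(Cnd ^ 2 * L / 4)) *
          ((B * c) * ((1 + σ⁻¹ * r) ^ n * Real.exp (-r ^ 2 / (4 * σ ^ 2)))) := by ring
      _ = Real.exp (-(Cnd ^ 2 * L / 4)) * ψ z := by rw [hψ_eq z]
  -- integrability
  have hψ_int : Integrable ψ := by
    have h1 : Integrable (fun w : Fin d → ℝ => aux15F d n (σ⁻¹ • w)) :=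
      (aux15_integrable_F d n).comp_smul (inv_ne_zero hσ.ne')
    have h2 : Integrable (fun z : Fin d → ℝ => aux15F d n (σ⁻¹ • (z - μf))) :=
      h1.comp_sub_right μf
    exact h2.const_mul _
  have hφc : Continuous φ := by
    simp only [hφdef]
    apply Continuous.mul
    apply Continuous.mul
    apply Continuous.mul
    · exact continuous_finset_prod _ fun i _ => by
        fun_prop
    · exact hfc
    · exact continuous_const
    · exact Real.continuous_exp.comp (by
        apply Continuous.div_const
        apply Continuous.neg
        exact (aux15_continuous_norm2.comp
          (continuous_pi fun i => (continuous_apply i).sub continuous_const)).pow 2)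
  have hφ_int : Integrable φ :=
    hψ_int.mono' hφc.aestronglyMeasurable
      (Filter.Eventually.of_forall fun z => by rw [Real.norm_eq_abs]; exact hbound z)
  -- value of ∫ ψ
  have hψ_val : ∫ z, ψ z = (B * c) * (σ ^ d * I) := by
    have e1 : ∫ z, ψ z = (B * c) * ∫ z : Fin d → ℝ, aux15F d n (σ⁻¹ • (z - μf)) := by
      simp only [hψdef]
      exact MeasureTheory.integral_const_mul _ _
    rw [e1]
    congr 1
    have h1 : ∫ z : Fin d → ℝ, aux15F d n (σ⁻¹ • (z - μf)) =
        ∫ z : Fin d → ℝ, aux15F d n (σ⁻¹ • z) :=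
      integral_sub_right_eq_self (fun z => aux15F d n (σ⁻¹ • z)) μf
    rw [h1, MeasureTheory.Measure.integral_comp_smul volume (aux15F d n) σ⁻¹,
      Module.finrank_fin_fun, inv_pow, inv_inv, abs_of_pos (pow_pos hσ d)]
    rw [smul_eq_mul, hIdef]
  -- split the integral
  have hsplit := MeasureTheory.integral_add_compl hS hφ_int
  have hgoal_eq : (∫ z, φ z) - (∫ z in S, φ z) = ∫ z in Sᶜ, φ z := by linarith
  rw [show (∫ z : Fin d → ℝ,
      (∏ i, ((z i - a * x i) / σ) ^ v i) * f z y *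
        ((2 * Real.pi) ^ ((d:ℝ) / 2) * σ ^ d)⁻¹ *
        Real.exp (-(norm2 fun i => z i - a * x i) ^ 2 / (2 * σ ^ 2))) = ∫ z, φ z from rfl]
  rw [show (∫ z in S,
      (∏ i, ((z i - a * x i) / σ) ^ v i) * f z y *
        ((2 * Real.pi) ^ ((d:ℝ) / 2) * σ ^ d)⁻¹ *
        Real.exp (-(norm2 fun i => z i - a * x i) ^ 2 / (2 * σ ^ 2))) = ∫ z in S, φ z from rfl]
  rw [hgoal_eq]
  -- bound the tail integral
  have hchain : |∫ z in Sᶜ, φ z| ≤ Real.exp (-(Cnd ^ 2 * L / 4)) * ((B * c) * (σ ^ d * I)) := by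
    calc |∫ z in Sᶜ, φ z| ≤ ∫ z in Sᶜ, |φ z| := by
          simpa [Real.norm_eq_abs] using
            MeasureTheory.norm_integral_le_integral_norm (μ := volume.restrict Sᶜ) φ
      _ ≤ ∫ z in Sᶜ, Real.exp (-(Cnd ^ 2 * L / 4)) * ψ z := by
          apply MeasureTheory.setIntegral_mono_on
          · exact hφ_int.abs.integrableOn
          · exact (hψ_int.const_mul _).integrableOn
          · exact hS.compl
          · exact hboundSc
      _ ≤ ∫ z, Real.exp (-(Cnd ^ 2 * L / 4)) * ψ z := by
          apply MeasureTheory.setIntegral_le_integral (hψ_int.const_mul _)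
          exact Filter.Eventually.of_forall fun z =>
            mul_nonneg (Real.exp_nonneg _) (hψ_nonneg z)
      _ = Real.exp (-(Cnd ^ 2 * L / 4)) * ∫ z, ψ z := MeasureTheory.integral_const_mul _ _
      _ = Real.exp (-(Cnd ^ 2 * L / 4)) * ((B * c) * (σ ^ d * I)) := by rw [hψ_val]
  refine le_trans hchain ?_
  -- final arithmetic
  have hcσ : c * σ ^ d = ((2 * Real.pi) ^ ((d:ℝ) / 2))⁻¹ := by
    rw [hcdef]
    field_simp
  have hBA : (B * c) * (σ ^ d * I) ≤ A := by
    have h1 : (B * c) * (σ ^ d * I) = (B * I) * (c * σ ^ d) := by ring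
    rw [h1, hcσ]
    calc (B * I) * ((2 * Real.pi) ^ ((d:ℝ) / 2))⁻¹ ≤ (B * I) * 1 := by
          apply mul_le_mul_of_nonneg_left _ (by positivity)
          rw [inv_le_one_iff₀]
          right; exact hP1
      _ = B * I := by ring
      _ ≤ A := le_max_left _ _
  have hexp_le : Real.exp (-(Cnd ^ 2 * L / 4)) ≤ ε * A⁻¹ := by
    have hK : L + Real.log A ≤ Cnd ^ 2 * L / 4 := by
      rw [hCnd_sq]
      have h1 : 4 * (1 + Real.log A / L₀) * L / 4 = L + Real.log A * (L / L₀) := by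
        field_simp
      rw [h1]
      have h2 : (1:ℝ) ≤ L / L₀ := (one_le_div hL0).2 hL_ge
      nlinarith
    calc Real.exp (-(Cnd ^ 2 * L / 4)) ≤ Real.exp (-(L + Real.log A)) :=
        Real.exp_le_exp.2 (by linarith)
      _ = Real.exp (-L) * Real.exp (-Real.log A) := by rw [← Real.exp_add]; ring_nf
      _ = ε * A⁻¹ := by
        rw [hLdef, Real.log_inv, neg_neg, Real.exp_log hε, Real.exp_neg, Real.exp_log hA0]
  calc Real.exp (-(Cnd ^ 2 * L / 4)) * ((B * c) * (σ ^ d * I))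
      ≤ (ε * A⁻¹) * A := by
        apply mul_le_mul hexp_le hBA
          (mul_nonneg (mul_nonneg hB.le hc.le) (mul_nonneg (by positivity) hI))
          (by positivity)
    _ = ε := by field_simp


end CDM
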